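/- The unique solution (ν₁, …, ν_{2d}) of the triangular linear system i/(i + (2d−i)λ) = Σ_{k=1}^{i} C(i,k) ν_k for i = 1, …, 2d is given by ν_j = j!(λ−1)^{j−1} / ∏_{k=1}^{j} (k + (2d−k)λ). -/

import Mathlib

open Finset

private def aa (d : ℕ) (lam : ℝ) (k : ℕ) : ℝ := (k : ℝ) + ((2 * d - k : ℕ) : ℝ) * lam

private noncomputable def QQ (d : ℕ) (lam : ℝ) (k : ℕ) : ℝ := ∏ m ∈ Finset.Icc 1 k, aa d lam m

private noncomputable def nuf (d : ℕ) (lam : ℝ) (j : ℕ) : ℝ :=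
  (Nat.factorial j : ℝ) * (lam - 1) ^ (j - 1) / QQ d lam j

private noncomputable def cc (d : ℕ) (lam : ℝ) (i k : ℕ) : ℝ :=
  (Nat.descFactorial i k : ℝ) * (lam - 1) ^ k * aa d lam k / (aa d lam i * QQ d lam k)

private lemma aa_pos (d : ℕ) {lam : ℝ} (hlam : 1 < lam) {k : ℕ} (hk : 1 ≤ k) :
    0 < aa d lam k := by
  unfold aa
  have h1 : (1 : ℝ) ≤ (k : ℝ) := by exact_mod_cast hk
  have h2 : (0 : ℝ) ≤ ((2 * d - k : ℕ) : ℝ) * lam := by positivity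
  linarith

private lemma QQ_pos (d : ℕ) {lam : ℝ} (hlam : 1 < lam) (k : ℕ) : 0 < QQ d lam k := by
  unfold QQ
  exact Finset.prod_pos fun m hm => aa_pos d hlam (Finset.mem_Icc.mp hm).1

private lemma aa_sub (d : ℕ) (lam : ℝ) {k i : ℕ} (hk : k ≤ 2 * d) (hi : i ≤ 2 * d) :
    aa d lam k - aa d lam i = ((i : ℝ) - (k : ℝ)) * (lam - 1) := by
  unfold aa
  rw [Nat.cast_sub hk, Nat.cast_sub hi]
  push_cast
  ring

private lemma tele (g : ℕ → ℝ) : ∀ i : ℕ, 1 ≤ i →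
    ∑ k ∈ Finset.Icc 1 i, (g k - g (k + 1)) = g 1 - g (i + 1) := by
  intro i
  induction i with
  | zero => omega
  | succ n ih =>
    intro _
    rcases Nat.eq_zero_or_pos n with hn | hn
    · subst hn; simp
    · rw [Finset.sum_Icc_succ_top (by omega), ih hn]; ring

private lemma key (d : ℕ) (lam : ℝ) (hlam : 1 < lam) (i : ℕ) (hi1 : 1 ≤ i) (hi2 : i ≤ 2 * d) :
    ∑ k ∈ Finset.Icc 1 i, (Nat.choose i k : ℝ) * nuf d lam k = (i : ℝ) / aa d lam i := by
  have hx : (0 : ℝ) < lam - 1 := by linarith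
  have hai : aa d lam i ≠ 0 := ne_of_gt (aa_pos d hlam hi1)
  have step : ∀ k ∈ Finset.Icc 1 i,
      (Nat.choose i k : ℝ) * nuf d lam k = (cc d lam i k - cc d lam i (k + 1)) / (lam - 1) := by
    intro k hk
    obtain ⟨hk1, hk2⟩ := Finset.mem_Icc.mp hk
    have hQk : QQ d lam k ≠ 0 := ne_of_gt (QQ_pos d hlam k)
    have hdesc : ((Nat.descFactorial i k : ℕ) : ℝ) =
        (Nat.factorial k : ℝ) * (Nat.choose i k : ℝ) := by
      exact_mod_cast congrArg (Nat.cast (R := ℝ)) (Nat.descFactorial_eq_factorial_mul_choose i k)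
    have hpow : (lam - 1) ^ k = (lam - 1) ^ (k - 1) * (lam - 1) := by
      conv_lhs => rw [show k = (k - 1) + 1 by omega]
      rw [pow_succ]
    have hdsucc : ((Nat.descFactorial i (k + 1) : ℕ) : ℝ) =
        ((i : ℝ) - (k : ℝ)) * (Nat.descFactorial i k : ℝ) := by
      rw [Nat.descFactorial_succ, Nat.cast_mul, Nat.cast_sub hk2]
    rcases eq_or_lt_of_le hk2 with hki | hki
    · -- k = i : top term, cc (i+1) = 0
      subst hki
      have h0 : cc d lam k (k + 1) = 0 := by
        unfold cc
        rw [Nat.descFactorial_eq_zero_iff_lt.mpr (by omega)]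
        simp
      rw [h0, sub_zero]
      unfold cc nuf
      rw [Nat.descFactorial_self, Nat.choose_self, hpow]
      field_simp
      ring
    · -- k < i
      have hk2d : k + 1 ≤ 2 * d := by omega
      have hak1 : aa d lam (k + 1) ≠ 0 := ne_of_gt (aa_pos d hlam (by omega))
      have hQk1 : QQ d lam (k + 1) = QQ d lam k * aa d lam (k + 1) := by
        unfold QQ
        rw [Finset.prod_Icc_succ_top (by omega)]
      have hsub : aa d lam k = aa d lam i + ((i : ℝ) - (k : ℝ)) * (lam - 1) := by
        have := aa_sub d lam (le_trans (le_of_lt hki) hi2) hi2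
        linarith
      have hsub1 : aa d lam (k + 1) = aa d lam i + ((i : ℝ) - (k : ℝ) - 1) * (lam - 1) := by
        have := aa_sub d lam hk2d hi2
        push_cast at this
        linarith
      unfold cc nuf
      have hak1' : aa d lam i + ((i : ℝ) - (k : ℝ) - 1) * (lam - 1) ≠ 0 := by
        rw [← hsub1]; exact hak1
      rw [hQk1, hdsucc, hdesc, hsub, hsub1, pow_succ, hpow]
      generalize (lam - 1) ^ (k - 1) = y
      generalize hA : aa d lam i + ((i : ℝ) - (k : ℝ) - 1) * (lam - 1) = A at hak1' ⊢
      field_simp [hak1']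
      subst hA
      ring
  rw [Finset.sum_congr rfl step, ← Finset.sum_div, tele _ i hi1]
  have h0 : cc d lam i (i + 1) = 0 := by
    unfold cc
    rw [Nat.descFactorial_eq_zero_iff_lt.mpr (by omega)]
    simp
  have h1 : cc d lam i 1 = (i : ℝ) * (lam - 1) / aa d lam i := by
    unfold cc QQ
    have ha1 : aa d lam 1 ≠ 0 := ne_of_gt (aa_pos d hlam le_rfl)
    rw [Nat.descFactorial_one]
    simp only [Finset.Icc_self, Finset.prod_singleton]
    field_simp
  rw [h0, h1]
  field_simp
  ring

/-- The unique solution of the triangular linear system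
`i/(i+(2d−i)λ) = Σ_{k=1}^{i} C(i,k) ν_k`, `i = 1, …, 2d`, is
`ν_j = j!(λ−1)^{j−1} / ∏_{k=1}^{j} (k+(2d−k)λ)`. -/
theorem stmt_3 (d : ℕ) (hd : 1 ≤ d) (lam : ℝ) (hlam : 1 < lam) (ν : ℕ → ℝ) :
    (∀ i, 1 ≤ i → i ≤ 2 * d →
      (i : ℝ) / ((i : ℝ) + ((2 * d - i : ℕ) : ℝ) * lam) =
        ∑ k ∈ Finset.Icc 1 i, (Nat.choose i k : ℝ) * ν k) ↔
    (∀ j, 1 ≤ j → j ≤ 2 * d →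
      ν j = (Nat.factorial j : ℝ) * (lam - 1) ^ (j - 1) /
        ∏ k ∈ Finset.Icc 1 j, ((k : ℝ) + ((2 * d - k : ℕ) : ℝ) * lam)) := by
  constructor
  · intro h j
    induction j using Nat.strong_induction_on with
    | _ j ih =>
      intro hj1 hj2
      have hj := h j hj1 hj2
      have hk := key d lam hlam j hj1 hj2
      have heq : ∑ k ∈ Finset.Icc 1 j, (Nat.choose j k : ℝ) * ν k =
          ∑ k ∈ Finset.Icc 1 j, (Nat.choose j k : ℝ) * nuf d lam k := by
        rw [← hj, hk]; rfl
      obtain ⟨m, rfl⟩ : ∃ m, j = m + 1 := ⟨j - 1, by omega⟩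
      rw [Finset.sum_Icc_succ_top (by omega), Finset.sum_Icc_succ_top (by omega)] at heq
      have hsum : ∑ k ∈ Finset.Icc 1 m, (Nat.choose (m + 1) k : ℝ) * ν k =
          ∑ k ∈ Finset.Icc 1 m, (Nat.choose (m + 1) k : ℝ) * nuf d lam k := by
        apply Finset.sum_congr rfl
        intro k hkk
        obtain ⟨h1, h2⟩ := Finset.mem_Icc.mp hkk
        rw [ih k (by omega) h1 (by omega)]
        rfl
      rw [hsum] at heq
      have : ν (m + 1) = nuf d lam (m + 1) := by
        have hc : (Nat.choose (m + 1) (m + 1) : ℝ) = 1 := by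
          rw [Nat.choose_self]; norm_num
        rw [hc] at heq
        linarith [heq]
      rw [this]
      rfl
  · intro h i hi1 hi2
    have hk := key d lam hlam i hi1 hi2
    rw [show ((i : ℝ) + ((2 * d - i : ℕ) : ℝ) * lam) = aa d lam i from rfl, ← hk]
    apply Finset.sum_congr rfl
    intro k hkk
    obtain ⟨h1, h2⟩ := Finset.mem_Icc.mp hkk
    rw [h k h1 (by omega)]
    rfl
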